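/- arXiv:2112.09055 — 2 statements merged into one kernel-verified Lean document; each statement's English description precedes it below -/
import Mathlib

section
/- Let G have conductance Φ_G and let T be an HC tree with dense branch (A_0, ..., A_k). Then cost_G(T) ≥ (Φ_G/2) · |A_k| · vol(A_k). -/
open Finset

/-- A hierarchical clustering (HC) tree: a binary tree with vertex-labelled leaves. -/
inductive HCTree (V : Type) where
  | leaf (v : V) : HCTree V
  | node (l r : HCTree V) : HCTree V

namespace HCTree

variable {V : Type} [Fintype V] [DecidableEq V]

/-- The list of leaf labels of an HC tree. -/
def leafList : HCTree V → List V
  | leaf v => [v]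
  | node l r => leafList l ++ leafList r

/-- The set of leaves of an HC tree. -/
def leaves (t : HCTree V) : Finset V := t.leafList.toFinset

/-- Total weight of (ordered) pairs between two vertex sets:
`w(S,T) = ∑_{u ∈ S, v ∈ T} w(u,v)`. -/
def cut (w : V → V → ℝ) (S T : Finset V) : ℝ := ∑ u ∈ S, ∑ v ∈ T, w u v

/-- The (weighted) degree of a vertex: `d_u = ∑_v w(u,v)`. -/
def deg (w : V → V → ℝ) (u : V) : ℝ := ∑ v, w u v

/-- The volume of a vertex set: `vol(S) = ∑_{u ∈ S} d_u`. -/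
def vol (w : V → V → ℝ) (S : Finset V) : ℝ := ∑ u ∈ S, deg w u

/-- Dasgupta's cost of an HC tree, via the equivalent internal-node formula:
`cost(T) = ∑_{N → (N₁,N₂)} |leaves(T[N])| · w(leaves(N₁), leaves(N₂))`. -/
def cost (w : V → V → ℝ) : HCTree V → ℝ
  | leaf _ => 0
  | node l r =>
      ((leaves (node l r)).card : ℝ) * cut w (leaves l) (leaves r)
        + cost w l + cost w r

/-- `t` is an HC tree of the graph on vertex set `V`: its leaves are distinct
and are exactly the vertices of `V`. -/
def isHC (t : HCTree V) : Prop := t.leafList.Nodup ∧ t.leaves = Finset.univ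

end HCTree

namespace HCTree

variable {V : Type} [Fintype V] [DecidableEq V]

/-- `DenseBranch w t k A B` says that `(A 0, …, A k)` is the dense branch of the HC tree `t`,
with `B (i+1)` the sibling of `A (i+1)`: `A 0` is the root, each `A (i+1)` is the child of
`A i` of higher volume, every node on the branch has volume greater than `vol(G)/2`,
and both children of the final node `A k` have volume at most `vol(G)/2`. -/
def DenseBranch (w : V → V → ℝ) (t : HCTree V) (k : ℕ)
    (A B : ℕ → HCTree V) : Prop :=
  A 0 = t ∧
  (∀ i < k,
      (A i = HCTree.node (A (i+1)) (B (i+1)) ∨ A i = HCTree.node (B (i+1)) (A (i+1))) ∧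
      vol w (leaves (B (i+1))) ≤ vol w (leaves (A (i+1)))) ∧
  (∀ i ≤ k, vol w (Finset.univ : Finset V) / 2 < vol w (leaves (A i))) ∧
  (∃ l r, A k = HCTree.node l r ∧
      vol w (leaves l) ≤ vol w (Finset.univ : Finset V) / 2 ∧
      vol w (leaves r) ≤ vol w (Finset.univ : Finset V) / 2)

end HCTree

namespace HCTree

variable {V : Type} [Fintype V] [DecidableEq V]

lemma leaves_node' (l r : HCTree V) : leaves (node l r) = leaves l ∪ leaves r := by
  simp [leaves, leafList]

lemma leaves_nonempty' (t : HCTree V) : (leaves t).Nonempty := by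
  induction t with
  | leaf v => exact ⟨v, by simp [leaves, leafList]⟩
  | node l r ihl ihr =>
      obtain ⟨v, hv⟩ := ihl
      exact ⟨v, by rw [leaves_node']; exact Finset.mem_union_left _ hv⟩

lemma nodup_node' {l r : HCTree V} (h : (node l r).leafList.Nodup) :
    l.leafList.Nodup ∧ r.leafList.Nodup ∧ Disjoint (leaves l) (leaves r) := by
  rw [leafList, List.nodup_append] at h
  refine ⟨h.1, h.2.1, ?_⟩
  rw [leaves, leaves, List.disjoint_toFinset_iff_disjoint]
  exact fun a ha hb => h.2.2 a ha a hb rfl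

lemma cut_nonneg' (w : V → V → ℝ) (hw : ∀ u v, 0 ≤ w u v) (S T : Finset V) :
    0 ≤ cut w S T :=
  Finset.sum_nonneg fun _ _ => Finset.sum_nonneg fun _ _ => hw _ _

lemma cut_comm' (w : V → V → ℝ) (hsymm : ∀ u v, w u v = w v u) (S T : Finset V) :
    cut w S T = cut w T S := by
  simp only [cut]
  rw [Finset.sum_comm]
  exact Finset.sum_congr rfl fun u _ => Finset.sum_congr rfl fun v _ => hsymm v u

lemma cut_mono_left' (w : V → V → ℝ) (hw : ∀ u v, 0 ≤ w u v) {S S' : Finset V}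
    (h : S ⊆ S') (T : Finset V) : cut w S T ≤ cut w S' T :=
  Finset.sum_le_sum_of_subset_of_nonneg h fun i _ _ =>
    Finset.sum_nonneg fun _ _ => hw _ _

lemma cut_union_right' (w : V → V → ℝ) {S T T' : Finset V} (h : Disjoint T T') :
    cut w S (T ∪ T') = cut w S T + cut w S T' := by
  simp only [cut]
  rw [← Finset.sum_add_distrib]
  exact Finset.sum_congr rfl fun u _ => Finset.sum_union h

lemma cost_nonneg' (w : V → V → ℝ) (hw : ∀ u v, 0 ≤ w u v) (t : HCTree V) :
    0 ≤ cost w t := by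
  induction t with
  | leaf v => simp [cost]
  | node l r ihl ihr =>
      have h1 := cut_nonneg' w hw (leaves l) (leaves r)
      have h2 : (0:ℝ) ≤ ((leaves (node l r)).card : ℝ) := by positivity
      simp only [cost]
      have := mul_nonneg h2 h1
      linarith

end HCTree

open HCTree in
/-- If `G` has conductance `Φ_G` and `T` is an HC tree with dense branch
`(A_0, …, A_k)`, then `cost_G(T) ≥ (Φ_G/2) · |A_k| · vol(A_k)`. -/
theorem cost_lower_bound_last_dense_node {V : Type} [Fintype V] [DecidableEq V]
    (w : V → V → ℝ) (hw : ∀ u v, 0 ≤ w u v) (hsymm : ∀ u v, w u v = w v u)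
    (Φ : ℝ) (hΦ0 : 0 ≤ Φ)
    (hΦ : ∀ S : Finset V, S.Nonempty → vol w S ≤ vol w (Finset.univ : Finset V) / 2 →
      Φ * vol w S ≤ cut w S Sᶜ)
    (t : HCTree V) (ht : isHC t) (k : ℕ) (A B : ℕ → HCTree V)
    (hdb : DenseBranch w t k A B) :
    Φ / 2 * ((leaves (A k)).card : ℝ) * vol w (leaves (A k)) ≤ cost w t := by
  obtain ⟨hA0, hstep, hbig, l, r, hAk, hl, hr⟩ := hdb
  -- nodup along the branch
  have hnodup : ∀ i, i ≤ k → (A i).leafList.Nodup := by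
    intro i
    induction i with
    | zero => intro _; rw [hA0]; exact ht.1
    | succ i ih =>
        intro hik
        have hik' : i < k := by omega
        have hprev := ih (le_of_lt hik')
        rcases (hstep i hik').1 with h | h
        · rw [h] at hprev; exact (nodup_node' hprev).1
        · rw [h] at hprev; exact (nodup_node' hprev).2.1
  -- subsets along the branch
  have hsubstep : ∀ i, i < k → leaves (A (i+1)) ⊆ leaves (A i) := by
    intro i hik
    rcases (hstep i hik).1 with h | h
    · rw [h, leaves_node']; exact Finset.subset_union_left
    · rw [h, leaves_node']; exact Finset.subset_union_right
  have hsub : ∀ d i, i + d = k → leaves (A k) ⊆ leaves (A i) := by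
    intro d
    induction d with
    | zero =>
        intro i h
        have : i = k := by omega
        rw [this]
    | succ d ih =>
        intro i h
        exact (ih (i+1) (by omega)).trans (hsubstep i (by omega))
  -- choose S, the child of A k of larger volume, and T its sibling
  have hnk := hnodup k le_rfl
  rw [hAk] at hnk
  have hdlr : Disjoint (leaves l) (leaves r) := (nodup_node' hnk).2.2
  obtain ⟨S, T, hunion, hdST, hvolTS, hShalf, hSne, hcutST⟩ :
      ∃ S T : Finset V, leaves (A k) = S ∪ T ∧ Disjoint S T ∧
        vol w T ≤ vol w S ∧ vol w S ≤ vol w (Finset.univ : Finset V) / 2 ∧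
        S.Nonempty ∧ cut w S T = cut w (leaves l) (leaves r) := by
    rcases le_total (vol w (leaves l)) (vol w (leaves r)) with hc | hc
    · exact ⟨leaves r, leaves l, by rw [hAk, leaves_node', Finset.union_comm],
        hdlr.symm, hc, hr, leaves_nonempty' r, cut_comm' w hsymm _ _⟩
    · exact ⟨leaves l, leaves r, by rw [hAk, leaves_node'], hdlr, hc, hl,
        leaves_nonempty' l, rfl⟩
  -- main induction along the branch
  have key : ∀ d i, i + d = k →
      ((leaves (A k)).card : ℝ) * cut w S (leaves (A i) \ S) ≤ cost w (A i) := by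
    intro d
    induction d with
    | zero =>
        intro i hik
        have hik' : i = k := by omega
        subst hik'
        have hsd : leaves (A i) \ S = T := by
          rw [hunion, Finset.union_sdiff_cancel_left hdST]
        rw [hsd, hcutST, hAk]
        simp only [cost]
        have h1 := cost_nonneg' w hw l
        have h2 := cost_nonneg' w hw r
        linarith
    | succ d ih =>
        intro i hik
        have hik' : i < k := by omega
        have ihh := ih (i+1) (by omega)
        have hSsub : S ⊆ leaves (A (i+1)) :=
          (hunion ▸ Finset.subset_union_left).trans (hsub d (i+1) (by omega))
        have hni := hnodup i (by omega)
        obtain ⟨hcost, hun, hdisj⟩ :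
            cost w (A i) = ((leaves (A i)).card : ℝ) *
                cut w (leaves (A (i+1))) (leaves (B (i+1)))
                + cost w (A (i+1)) + cost w (B (i+1)) ∧
            leaves (A i) = leaves (A (i+1)) ∪ leaves (B (i+1)) ∧
            Disjoint (leaves (A (i+1))) (leaves (B (i+1))) := by
          rcases (hstep i hik').1 with h | h
          · refine ⟨?_, by rw [h, leaves_node'], (nodup_node' (h ▸ hni)).2.2⟩
            rw [h]; simp only [cost]
          · refine ⟨?_, by rw [h, leaves_node', Finset.union_comm],
              ((nodup_node' (h ▸ hni)).2.2).symm⟩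
            rw [h]; simp only [cost]
            rw [cut_comm' w hsymm (leaves (B (i+1))) (leaves (A (i+1)))]
            ring
        have hsd : leaves (A i) \ S = (leaves (A (i+1)) \ S) ∪ leaves (B (i+1)) := by
          rw [hun, Finset.union_sdiff_distrib]
          congr 1
          exact Finset.sdiff_eq_self_of_disjoint (hdisj.symm.mono_right hSsub)
        have hcut : cut w S (leaves (A i) \ S) =
            cut w S (leaves (A (i+1)) \ S) + cut w S (leaves (B (i+1))) := by
          rw [hsd, cut_union_right' w (hdisj.mono_left Finset.sdiff_subset)]
        have hcard : ((leaves (A k)).card : ℝ) ≤ ((leaves (A i)).card : ℝ) := by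
          exact_mod_cast Finset.card_le_card (hsub (d+1) i hik)
        have h1 : cut w S (leaves (B (i+1))) ≤
            cut w (leaves (A (i+1))) (leaves (B (i+1))) :=
          cut_mono_left' w hw hSsub _
        have h2 : 0 ≤ cut w S (leaves (B (i+1))) := cut_nonneg' w hw _ _
        have h3 : 0 ≤ cost w (B (i+1)) := cost_nonneg' w hw _
        have h4 : (0:ℝ) ≤ ((leaves (A k)).card : ℝ) := by positivity
        have h5 : ((leaves (A k)).card : ℝ) * cut w S (leaves (B (i+1))) ≤
            ((leaves (A i)).card : ℝ) * cut w (leaves (A (i+1))) (leaves (B (i+1))) :=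
          mul_le_mul hcard h1 h2 (le_trans h4 hcard)
        rw [hcost, hcut, mul_add]
        linarith
  have hk0 := key k 0 (by omega)
  have hA0leaves : leaves (A 0) = Finset.univ := by rw [hA0]; exact ht.2
  rw [hA0leaves] at hk0
  have hcompl : (Finset.univ : Finset V) \ S = Sᶜ :=
    (Finset.compl_eq_univ_sdiff S).symm
  rw [hcompl, hA0] at hk0
  have hΦS := hΦ S hSne hShalf
  have hvolAk : vol w (leaves (A k)) = vol w S + vol w T := by
    rw [hunion]; simp only [vol]; rw [Finset.sum_union hdST]
  have hcardnn : (0:ℝ) ≤ ((leaves (A k)).card : ℝ) := by positivity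
  have hΦvol : Φ / 2 * vol w (leaves (A k)) ≤ Φ * vol w S := by
    rw [hvolAk]
    nlinarith [mul_le_mul_of_nonneg_left hvolTS hΦ0]
  calc Φ / 2 * ((leaves (A k)).card : ℝ) * vol w (leaves (A k))
      = ((leaves (A k)).card : ℝ) * (Φ / 2 * vol w (leaves (A k))) := by ring
    _ ≤ ((leaves (A k)).card : ℝ) * (Φ * vol w S) :=
        mul_le_mul_of_nonneg_left hΦvol hcardnn
    _ ≤ ((leaves (A k)).card : ℝ) * cut w S Sᶜ := by
        have := mul_le_mul_of_nonneg_left hΦS hcardnn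
        linarith
    _ ≤ cost w t := hk0
end

section
/- Let core(P_i) ⊆ P_i ⊆ V with Φ_G(core(P_i)) ≤ φ_out/(k+1), and suppose w(P_i\core(P_i) → core(P_i)) ≥ w(P_i\core(P_i) → V\P_i)/(k-1) when k ≥ 2. Then Φ_G(P_i) ≤ k · Φ_G(core(P_i)). -/
open Finset

variable {V : Type} [Fintype V] [DecidableEq V]

/-- Total weight of (ordered) pairs between two vertex sets:
`w(S,T) = ∑_{u ∈ S, v ∈ T} w(u,v)`. -/
def cut (w : V → V → ℝ) (S T : Finset V) : ℝ := ∑ u ∈ S, ∑ v ∈ T, w u v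

/-- The (weighted) degree of a vertex: `d_u = ∑_v w(u,v)`. -/
def deg (w : V → V → ℝ) (u : V) : ℝ := ∑ v, w u v

/-- The volume of a vertex set: `vol(S) = ∑_{u ∈ S} d_u`. -/
def vol (w : V → V → ℝ) (S : Finset V) : ℝ := ∑ u ∈ S, deg w u

/-- The conductance of a vertex set: `Φ_G(S) = w(S, V∖S) / vol(S)`. -/
noncomputable def condOf (w : V → V → ℝ) (S : Finset V) : ℝ := cut w S Sᶜ / vol w S

/-- `w(S → T) = w(S, T ∖ S)`. -/
def wto (w : V → V → ℝ) (S T : Finset V) : ℝ := cut w S (T \ S)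

/-- The relative conductance
`φ(S,P) = w(S → P) / ((vol(P∖S)/vol(P)) · w(S → V∖P))`, set to `1` whenever the
right-hand side is undefined. -/
noncomputable def relCond (w : V → V → ℝ) (S P : Finset V) : ℝ :=
  if (vol w (P \ S) / vol w P) * wto w S ((Finset.univ : Finset V) \ P) ≠ 0 then
    wto w S P / ((vol w (P \ S) / vol w P) * wto w S ((Finset.univ : Finset V) \ P))
  else 1


lemma cut_nonneg (w : V → V → ℝ) (hw : ∀ u v, 0 ≤ w u v) (S T : Finset V) :
    0 ≤ cut w S T := by
  apply Finset.sum_nonneg; intro u _; exact Finset.sum_nonneg fun v _ => hw u v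

lemma cut_comm (w : V → V → ℝ) (hsymm : ∀ u v, w u v = w v u) (S T : Finset V) :
    cut w S T = cut w T S := by
  unfold cut; rw [Finset.sum_comm]; simp_rw [hsymm]

lemma cut_union_left (w : V → V → ℝ) {S S' : Finset V} (h : Disjoint S S') (T : Finset V) :
    cut w (S ∪ S') T = cut w S T + cut w S' T := by
  unfold cut; exact Finset.sum_union h

lemma cut_mono_right (w : V → V → ℝ) (hw : ∀ u v, 0 ≤ w u v) (S : Finset V)
    {T T' : Finset V} (h : T ⊆ T') : cut w S T ≤ cut w S T' := by
  apply Finset.sum_le_sum; intro u _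
  exact Finset.sum_le_sum_of_subset_of_nonneg h (fun v _ _ => hw u v)

lemma vol_mono (w : V → V → ℝ) (hw : ∀ u v, 0 ≤ w u v) {S T : Finset V} (h : S ⊆ T) :
    vol w S ≤ vol w T := by
  apply Finset.sum_le_sum_of_subset_of_nonneg h
  intro u _ _; exact Finset.sum_nonneg fun v _ => hw u v

/-- Let `core(P_i) ⊆ P_i ⊆ V` with `Φ_G(core(P_i)) ≤ φ_out/(k+1)`, and
suppose `w(P_i∖core(P_i) → core(P_i)) ≥ w(P_i∖core(P_i) → V∖P_i)/(k-1)` with `k ≥ 2`.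
Then `Φ_G(P_i) ≤ k · Φ_G(core(P_i))`. -/
theorem cond_P_le_k_cond_core {V : Type} [Fintype V] [DecidableEq V]
    (w : V → V → ℝ) (hw : ∀ u v, 0 ≤ w u v) (hsymm : ∀ u v, w u v = w v u)
    (k : ℕ) (hk : 2 ≤ k) (φout : ℝ)
    (Pi core : Finset V) (hcoreP : core ⊆ Pi)
    (hvol : 0 < vol w core)
    (hcond : condOf w core ≤ φout / ((k : ℝ) + 1))
    (havg : wto w (Pi \ core) ((Finset.univ : Finset V) \ Pi) / ((k : ℝ) - 1)
      ≤ wto w (Pi \ core) core) :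
    condOf w Pi ≤ (k : ℝ) * condOf w core := by
  have hdisj : Disjoint core (Pi \ core) := Finset.disjoint_sdiff
  have hunion : core ∪ (Pi \ core) = Pi := Finset.union_sdiff_of_subset hcoreP
  set A := cut w (Pi \ core) core with hA
  set B := cut w (Pi \ core) Piᶜ with hB
  have hdisj2 : Disjoint (Piᶜ : Finset V) (Pi \ core) :=
    disjoint_compl_left.mono_right Finset.sdiff_subset
  have hwtoc : wto w (Pi \ core) core = A := by
    unfold wto
    rw [Finset.sdiff_eq_self_of_disjoint hdisj]
  have hwtoo : wto w (Pi \ core) ((Finset.univ : Finset V) \ Pi) = B := by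
    unfold wto
    have h1 : (Finset.univ : Finset V) \ Pi = Piᶜ := (Finset.compl_eq_univ_sdiff Pi).symm
    rw [h1, Finset.sdiff_eq_self_of_disjoint hdisj2]
  rw [hwtoc, hwtoo] at havg
  have hAnn : 0 ≤ A := cut_nonneg w hw _ _
  have hBnn : 0 ≤ B := cut_nonneg w hw _ _
  have hk1 : (0:ℝ) < (k:ℝ) - 1 := by
    have : (2:ℝ) ≤ (k:ℝ) := by exact_mod_cast hk
    linarith
  have hBle : B ≤ ((k:ℝ) - 1) * A := by
    rw [div_le_iff₀ hk1] at havg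
    linarith [havg]
  have hcutPi : cut w Pi Piᶜ = cut w core Piᶜ + B := by
    have h := cut_union_left w hdisj Piᶜ
    rw [hunion] at h
    exact h
  have hcompl : coreᶜ = Piᶜ ∪ (Pi \ core) := by
    ext x; simp [Finset.mem_compl, Finset.mem_sdiff]; tauto
  have hcutcore : cut w core coreᶜ = cut w core Piᶜ + A := by
    rw [hcompl]
    rw [cut_comm w hsymm core (Piᶜ ∪ (Pi \ core)), cut_union_left w hdisj2,
      cut_comm w hsymm Piᶜ core]
  have hAle : A ≤ cut w core coreᶜ := by
    nlinarith [cut_nonneg w hw core Piᶜ]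
  have hkey : cut w Pi Piᶜ ≤ (k:ℝ) * cut w core coreᶜ := by
    have hk2 : (2:ℝ) ≤ (k:ℝ) := by exact_mod_cast hk
    nlinarith [cut_nonneg w hw core Piᶜ]
  have hvle : vol w core ≤ vol w Pi := vol_mono w hw hcoreP
  have hvolP : 0 < vol w Pi := lt_of_lt_of_le hvol hvle
  have hcn : 0 ≤ cut w core coreᶜ := cut_nonneg w hw _ _
  have hkpos : (0:ℝ) ≤ (k:ℝ) := by positivity
  unfold condOf
  rw [div_le_iff₀ hvolP]
  have hratio : 1 ≤ vol w Pi / vol w core := (one_le_div hvol).mpr hvle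
  have heq : (k:ℝ) * (cut w core coreᶜ / vol w core) * vol w Pi
      = ((k:ℝ) * cut w core coreᶜ) * (vol w Pi / vol w core) := by
    field_simp
  rw [heq]
  nlinarith [mul_nonneg hkpos hcn]
end
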